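/- Let G = (V,E) be a finite simple graph and let u, v, s, t ∈ V be distinct vertices such that uv ∈ E, st ∈ E, and the subgraph of G induced on {u,v,s,t} has exactly two edges (so there are no edges between {u,v} and {s,t}). Then there exists a set E' ⊆ E with |E'| ≤ deg(u) + deg(v) + deg(s) + deg(t) − 2 and γ(G − E') = γ(G) + 2; consequently Sb₂(G) ≤ deg(u) + deg(v) + deg(s) + deg(t) − 2. -/

import Mathlib

/-- A finite set of vertices `D` is a dominating set of `G` if every vertex
is in `D` or adjacent to a vertex in `D`. -/
def SimpleGraph.IsDominatingSet {V : Type*} (G : SimpleGraph V) (D : Finset V) : Prop :=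
  ∀ v : V, v ∈ D ∨ ∃ u ∈ D, G.Adj u v

/-- The domination number of `G`: the minimum cardinality of a dominating set. -/
noncomputable def SimpleGraph.domNum {V : Type*} (G : SimpleGraph V) : ℕ :=
  sInf {n : ℕ | ∃ D : Finset V, G.IsDominatingSet D ∧ D.card = n}

/-- The `k`-synchronous bondage number of `G`: the minimum cardinality of a set of edges
whose deletion increases the domination number by exactly `k`.  (`Sb 1` is the classical
bondage number.) -/
noncomputable def SimpleGraph.synchBondage {V : Type*} (G : SimpleGraph V) (k : ℕ) : ℕ :=
  sInf {m : ℕ | ∃ E' : Finset (Sym2 V), ↑E' ⊆ G.edgeSet ∧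
    (G.deleteEdges ↑E').domNum = G.domNum + k ∧ E'.card = m}

section Aux

open Finset

variable {V : Type*} [Fintype V] [DecidableEq V]

/-- Some dominating set achieves the domination number. -/
lemma domNum_exists (H : SimpleGraph V) :
    ∃ D : Finset V, H.IsDominatingSet D ∧ D.card = H.domNum := by
  have hne : {n : ℕ | ∃ D : Finset V, H.IsDominatingSet D ∧ D.card = n}.Nonempty :=
    ⟨(Finset.univ : Finset V).card, Finset.univ, fun w => Or.inl (Finset.mem_univ w), rfl⟩
  exact Nat.sInf_mem hne

lemma domNum_le (H : SimpleGraph V) {D : Finset V} (hD : H.IsDominatingSet D) :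
    H.domNum ≤ D.card :=
  Nat.sInf_le ⟨D, hD, rfl⟩

/-- Deleting one more edge increases the domination number by at most one. -/
lemma domNum_deleteEdges_single_le (H : SimpleGraph V) (e : Sym2 V) :
    (H.deleteEdges {e}).domNum ≤ H.domNum + 1 := by
  induction e using Sym2.ind with
  | _ a b =>
  obtain ⟨D, hD, hcard⟩ := domNum_exists H
  have key : ∀ (x : V), x ∈ D →
      (H.deleteEdges {s(a, b)}).IsDominatingSet (insert x D) ∨ True := fun _ _ => Or.inr trivial
  -- helper: adjacency survives unless the edge is exactly s(a,b)
  have hsurv : ∀ d w : V, H.Adj d w → s(d, w) ≠ s(a, b) →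
      (H.deleteEdges {s(a, b)}).Adj d w := by
    intro d w hdw hne
    rw [SimpleGraph.deleteEdges_adj]
    exact ⟨hdw, by simpa using hne⟩
  by_cases ha : a ∈ D
  · refine le_trans (domNum_le _ (D := insert b D) ?_) (by
      calc (insert b D).card ≤ D.card + 1 := Finset.card_insert_le _ _
      _ = H.domNum + 1 := by rw [hcard])
    intro w
    rcases hD w with hw | ⟨d, hd, hdw⟩
    · exact Or.inl (Finset.mem_insert_of_mem hw)
    · by_cases heq : s(d, w) = s(a, b)
      · rw [Sym2.eq_iff] at heq
        rcases heq with ⟨hda, hwb⟩ | ⟨hdb, hwa⟩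
        · exact Or.inl (by simp [hwb])
        · exact Or.inl (Finset.mem_insert_of_mem (hwa ▸ ha))
      · exact Or.inr ⟨d, Finset.mem_insert_of_mem hd, hsurv d w hdw heq⟩
  · by_cases hb : b ∈ D
    · refine le_trans (domNum_le _ (D := insert a D) ?_) (by
        calc (insert a D).card ≤ D.card + 1 := Finset.card_insert_le _ _
        _ = H.domNum + 1 := by rw [hcard])
      intro w
      rcases hD w with hw | ⟨d, hd, hdw⟩
      · exact Or.inl (Finset.mem_insert_of_mem hw)
      · by_cases heq : s(d, w) = s(a, b)
        · rw [Sym2.eq_iff] at heq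
          rcases heq with ⟨hda, hwb⟩ | ⟨hdb, hwa⟩
          · exact Or.inl (Finset.mem_insert_of_mem (hwb ▸ hb))
          · exact Or.inl (by simp [hwa])
        · exact Or.inr ⟨d, Finset.mem_insert_of_mem hd, hsurv d w hdw heq⟩
    · refine le_trans (domNum_le _ (D := D) ?_) (by omega)
      intro w
      rcases hD w with hw | ⟨d, hd, hdw⟩
      · exact Or.inl hw
      · refine Or.inr ⟨d, hd, hsurv d w hdw ?_⟩
        intro heq
        rw [Sym2.eq_iff] at heq
        rcases heq with ⟨hda, _⟩ | ⟨hdb, _⟩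
        · exact ha (hda ▸ hd)
        · exact hb (hdb ▸ hd)

/-- Discrete intermediate value theorem for step-at-most-one functions. -/
lemma nat_ivt (f : ℕ → ℕ) (c : ℕ) (hstep : ∀ i, f (i + 1) ≤ f i + 1) :
    ∀ m : ℕ, f 0 ≤ c → c ≤ f m → ∃ i ≤ m, f i = c := by
  intro m
  induction m with
  | zero => intro h0 hm; exact ⟨0, le_refl 0, le_antisymm h0 hm⟩
  | succ n ih =>
    intro h0 hm
    by_cases hc : c ≤ f n
    · obtain ⟨i, hi, hfi⟩ := ih h0 hc
      exact ⟨i, le_trans hi (Nat.le_succ n), hfi⟩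
    · have := hstep n
      exact ⟨n + 1, le_refl _, by omega⟩

end Aux

/-- if `uv` and `st` are edges and the subgraph induced on `{u,v,s,t}` has
exactly two edges, then `Sb₂(G) ≤ deg u + deg v + deg s + deg t − 2`; moreover such a
2-synchronous bondage set of at most this size exists. -/
theorem synchBondage_two_le_of_two_disjoint_edges {V : Type*} [Fintype V] [DecidableEq V]
    (G : SimpleGraph V) [DecidableRel G.Adj] (u v s t : V)
    (huv : u ≠ v) (hus : u ≠ s) (hut : u ≠ t) (hvs : v ≠ s) (hvt : v ≠ t) (hst : s ≠ t)
    (hadj1 : G.Adj u v) (hadj2 : G.Adj s t)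
    (hinduced : {e ∈ G.edgeSet | ∀ x ∈ e, x ∈ ({u, v, s, t} : Set V)}.ncard = 2) :
    (∃ E' : Finset (Sym2 V), ↑E' ⊆ G.edgeSet ∧
      E'.card ≤ G.degree u + G.degree v + G.degree s + G.degree t - 2 ∧
      (G.deleteEdges ↑E').domNum = G.domNum + 2) ∧
    G.synchBondage 2 ≤ G.degree u + G.degree v + G.degree s + G.degree t - 2 := by
  classical
  -- the full bondage candidate: all edges incident to one of the four vertices
  set A : Finset (Sym2 V) := G.incidenceFinset u with hA
  set B : Finset (Sym2 V) := G.incidenceFinset v with hB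
  set C : Finset (Sym2 V) := G.incidenceFinset s with hC
  set Dd : Finset (Sym2 V) := G.incidenceFinset t with hDd
  set F : Finset (Sym2 V) := (A ∪ B) ∪ (C ∪ Dd) with hF
  -- F is contained in the edge set
  have hFsub : (↑F : Set (Sym2 V)) ⊆ G.edgeSet := by
    intro e he
    simp only [hF, Finset.coe_union, Set.mem_union, Finset.mem_coe,
      SimpleGraph.mem_incidenceFinset, hA, hB, hC, hDd] at he
    rcases he with (h | h) | (h | h) <;> exact h.1
  -- cardinality bound
  have hcardF : F.card ≤ G.degree u + G.degree v + G.degree s + G.degree t - 2 := by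
    have h1 : (A ∪ B).card + (A ∩ B).card = A.card + B.card :=
      Finset.card_union_add_card_inter A B
    have h2 : (C ∪ Dd).card + (C ∩ Dd).card = C.card + Dd.card :=
      Finset.card_union_add_card_inter C Dd
    have hAB : s(u, v) ∈ A ∩ B := by
      simp only [Finset.mem_inter, hA, hB, SimpleGraph.mem_incidenceFinset,
        SimpleGraph.mk'_mem_incidenceSet_iff]
      tauto
    have hCD : s(s, t) ∈ C ∩ Dd := by
      simp only [Finset.mem_inter, hC, hDd, SimpleGraph.mem_incidenceFinset,
        SimpleGraph.mk'_mem_incidenceSet_iff]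
      tauto
    have hAB1 : 1 ≤ (A ∩ B).card := Finset.card_pos.mpr ⟨_, hAB⟩
    have hCD1 : 1 ≤ (C ∩ Dd).card := Finset.card_pos.mpr ⟨_, hCD⟩
    have hFle : F.card ≤ (A ∪ B).card + (C ∪ Dd).card := Finset.card_union_le _ _
    have hAc : A.card = G.degree u := G.card_incidenceFinset_eq_degree u
    have hBc : B.card = G.degree v := G.card_incidenceFinset_eq_degree v
    have hCc : C.card = G.degree s := G.card_incidenceFinset_eq_degree s
    have hDc : Dd.card = G.degree t := G.card_incidenceFinset_eq_degree t
    omega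
  -- the four vertices are isolated in `G.deleteEdges ↑F`
  have hiso : ∀ x ∈ ({u, v, s, t} : Set V), ∀ d : V, ¬ (G.deleteEdges (↑F : Set (Sym2 V))).Adj d x := by
    intro x hx d hadj
    rw [SimpleGraph.deleteEdges_adj] at hadj
    apply hadj.2
    have hedge : s(d, x) ∈ G.edgeSet := hadj.1
    simp only [hF, Finset.coe_union, Set.mem_union, Finset.mem_coe,
      SimpleGraph.mem_incidenceFinset, hA, hB, hC, hDd]
    have hmem : ∀ y : V, x = y → s(d, x) ∈ G.incidenceSet y := by
      intro y hy; exact ⟨hedge, by rw [← hy]; exact Sym2.mem_mk_right d x⟩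
    rcases hx with rfl | rfl | rfl | rfl
    · exact Or.inl (Or.inl (hmem _ rfl))
    · exact Or.inl (Or.inr (hmem _ rfl))
    · exact Or.inr (Or.inl (hmem _ rfl))
    · exact Or.inr (Or.inr (hmem _ rfl))
  -- lower bound: domination number after deleting all of F is at least domNum + 2
  have hlower : G.domNum + 2 ≤ (G.deleteEdges (↑F : Set (Sym2 V))).domNum := by
    obtain ⟨D, hD, hcard⟩ := domNum_exists (G.deleteEdges (↑F : Set (Sym2 V)))
    have hmemD : ∀ x ∈ ({u, v, s, t} : Set V), x ∈ D := by
      intro x hx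
      rcases hD x with h | ⟨d, _, hdx⟩
      · exact h
      · exact absurd hdx (hiso x hx d)
    have hu : u ∈ D := hmemD u (by simp)
    have hv : v ∈ D := hmemD v (by simp)
    have hs : s ∈ D := hmemD s (by simp)
    have ht : t ∈ D := hmemD t (by simp)
    -- D minus {v, t} dominates G
    have hdom : G.IsDominatingSet ((D.erase v).erase t) := by
      intro w
      by_cases hwv : w = v
      · refine Or.inr ⟨u, ?_, hwv ▸ hadj1⟩
        exact Finset.mem_erase.mpr ⟨hut, Finset.mem_erase.mpr ⟨huv, hu⟩⟩
      by_cases hwt : w = t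
      · refine Or.inr ⟨s, ?_, hwt ▸ hadj2⟩
        exact Finset.mem_erase.mpr ⟨hst, Finset.mem_erase.mpr ⟨hvs.symm, hs⟩⟩
      rcases hD w with hw | ⟨d, hd, hdw⟩
      · exact Or.inl (Finset.mem_erase.mpr ⟨hwt, Finset.mem_erase.mpr ⟨hwv, hw⟩⟩)
      · have hdv : d ≠ v := fun h => hiso v (by simp) w ((h ▸ hdw).symm)
        have hdt : d ≠ t := fun h => hiso t (by simp) w ((h ▸ hdw).symm)
        refine Or.inr ⟨d, Finset.mem_erase.mpr ⟨hdt, Finset.mem_erase.mpr ⟨hdv, hd⟩⟩, ?_⟩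
        exact (SimpleGraph.deleteEdges_adj.mp hdw).1
    have hle := domNum_le G hdom
    have htv : t ∈ D.erase v := Finset.mem_erase.mpr ⟨hvt.symm, ht⟩
    have hc1 : (D.erase v).card = D.card - 1 := Finset.card_erase_of_mem hv
    have hc2 : ((D.erase v).erase t).card = (D.erase v).card - 1 :=
      Finset.card_erase_of_mem htv
    have hvD : 1 ≤ D.card := Finset.card_pos.mpr ⟨v, hv⟩
    have htD : 1 ≤ (D.erase v).card := Finset.card_pos.mpr ⟨t, htv⟩
    omega
  -- intermediate value argument along a list enumeration of F
  set l : List (Sym2 V) := F.toList with hl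
  have hlF : l.toFinset = F := Finset.toList_toFinset F
  set f : ℕ → ℕ := fun i => (G.deleteEdges (↑(l.take i).toFinset : Set (Sym2 V))).domNum with hf
  have hf0 : f 0 = G.domNum := by
    simp only [hf, List.take_zero, List.toFinset_nil, Finset.coe_empty,
      SimpleGraph.deleteEdges_empty]
  have hfm : G.domNum + 2 ≤ f l.length := by
    simpa only [hf, List.take_length, hlF] using hlower
  have hstep : ∀ i, f (i + 1) ≤ f i + 1 := by
    intro i
    by_cases hil : i < l.length
    · have htake : l.take (i + 1) = l.take i ++ [l.get ⟨i, hil⟩] := by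
        rw [← List.take_concat_get hil, List.concat_eq_append]
        rfl
      have hset : ((l.take (i + 1)).toFinset : Set (Sym2 V)) =
          (↑(l.take i).toFinset : Set (Sym2 V)) ∪ {l.get ⟨i, hil⟩} := by
        ext e
        simp only [Finset.mem_coe, List.mem_toFinset, Set.mem_union,
          Set.mem_singleton_iff, htake, List.mem_append, List.mem_singleton]
      have : G.deleteEdges ((l.take (i + 1)).toFinset : Set (Sym2 V)) =
          (G.deleteEdges (↑(l.take i).toFinset : Set (Sym2 V))).deleteEdges {l.get ⟨i, hil⟩} := by
        rw [SimpleGraph.deleteEdges_deleteEdges, hset]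
      simp only [hf]
      rw [this]
      exact domNum_deleteEdges_single_le _ _
    · have : l.take (i + 1) = l.take i := by
        rw [List.take_of_length_le (by omega), List.take_of_length_le (by omega)]
      simp only [hf, this]
      omega
  obtain ⟨i, him, hfi⟩ := nat_ivt f (G.domNum + 2) hstep l.length (by omega) hfm
  set E' : Finset (Sym2 V) := (l.take i).toFinset with hE'
  have hE'subF : E' ⊆ F := by
    intro e he
    rw [← hlF]
    exact List.mem_toFinset.mpr (List.take_subset i l (List.mem_toFinset.mp he))
  have hE'sub : (↑E' : Set (Sym2 V)) ⊆ G.edgeSet := fun e he =>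
    hFsub (Finset.mem_coe.mpr (hE'subF (Finset.mem_coe.mp he)))
  have hE'card : E'.card ≤ G.degree u + G.degree v + G.degree s + G.degree t - 2 :=
    le_trans (Finset.card_le_card hE'subF) hcardF
  have hE'dom : (G.deleteEdges (↑E' : Set (Sym2 V))).domNum = G.domNum + 2 := hfi
  refine ⟨⟨E', hE'sub, hE'card, hE'dom⟩, ?_⟩
  exact le_trans (Nat.sInf_le ⟨E', hE'sub, hE'dom, rfl⟩) hE'card
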